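/- In the rational quaternion algebra B = (6, -3)/ℚ, the order O = ℤ·1 + ℤ·(i/2 + k/6) + ℤ·(1/2 + j/2) + ℤ·(k/3) has reduced discriminant 6; equivalently, the determinant of the Gram matrix (trd(eᵢ·e̅ⱼ)) of its basis equals 6² = 36. -/

import Mathlib

open scoped Quaternion

/-- The reduced trace of a quaternion. -/
def trd63 (x : ℍ[ℚ, 6, -3]) : ℚ := 2 * x.re

/-- The ℤ-basis e₁ = 1, e₂ = i/2 + k/6, e₃ = 1/2 + j/2, e₄ = k/3 of the order
O in the quaternion algebra (6,-3)/ℚ. -/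
def basis63 : Fin 4 → ℍ[ℚ, 6, -3]
  | 0 => 1
  | 1 => ⟨0, 1/2, 0, 1/6⟩
  | 2 => ⟨1/2, 0, 1/2, 0⟩
  | 3 => ⟨0, 0, 0, 1/3⟩

/-- the determinant of the Gram matrix (trd(eᵢ·e̅ⱼ)) of the basis of
the order O = ℤ·1 + ℤ·(i/2 + k/6) + ℤ·(1/2 + j/2) + ℤ·(k/3) equals 6² = 36, i.e.
O has reduced discriminant 6. -/
theorem quatOrder63_discriminant :
    (Matrix.of fun i j : Fin 4 => trd63 (basis63 i * star (basis63 j))).det = 36 := by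
  have h : (Matrix.of fun i j : Fin 4 => trd63 (basis63 i * star (basis63 j))) =
      !![2, 0, 1, 0; 0, -4, 0, -2; 1, 0, 2, 0; 0, -2, 0, -4] := by
    ext i j
    fin_cases i <;> fin_cases j <;>
      norm_num [trd63, basis63, QuaternionAlgebra.re_mul, QuaternionAlgebra.ext_iff,
        Matrix.of_apply, Matrix.cons_val_zero, Matrix.cons_val_one]
  rw [h, Matrix.det_succ_row_zero]
  simp [Fin.sum_univ_succ, Matrix.det_fin_three, Fin.succAbove]; norm_num
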